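/- (Travelling wave reduction of the TED equation.) Let Θ : ℝ⁸ → ℝ be smooth and let λ₁,…,λ₄ ∈ ℝ. Suppose Θ satisfies the travelling wave constraints Θ_{y^i} = λ_i Θ_{x^i} for each i = 1,…,4 at every point. Then ω_{ik} = Θ_{x^i y^k} − Θ_{x^k y^i} = (λ_k − λ_i) Θ_{x^i x^k}, and the left-hand side of the 4+4-dimensional TED equation, (Θ_{x¹y²} − Θ_{x²y¹})(Θ_{x³y⁴} − Θ_{x⁴y³}) + (Θ_{x²y³} − Θ_{x³y²})(Θ_{x¹y⁴} − Θ_{x⁴y¹}) + (Θ_{x³y¹} − Θ_{x¹y³})(Θ_{x²y⁴} − Θ_{x⁴y²}), equals (λ₁−λ₂)(λ₃−λ₄)Θ_{x¹x²}Θ_{x³x⁴} + (λ₂−λ₃)(λ₁−λ₄)Θ_{x²x³}Θ_{x¹x⁴} + (λ₃−λ₁)(λ₂−λ₄)Θ_{x³x¹}Θ_{x²x⁴}. In particular, Θ satisfies the TED equation at a point if and only if it satisfies the symmetric general heavenly equation there. -/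

import Mathlib

noncomputable section

/-- Partial derivative of `f : ℝⁿ → ℝ` in the `i`-th coordinate direction. -/
def pd {n : ℕ} (i : Fin n) (f : (Fin n → ℝ) → ℝ) : (Fin n → ℝ) → ℝ :=
  fun p => fderiv ℝ f p (Pi.single i 1)

/-- `∂/∂x^i` on functions of `(x¹,…,x⁴,y¹,…,y⁴) ∈ ℝ⁸`. -/
def px (i : Fin 4) (f : (Fin 8 → ℝ) → ℝ) : (Fin 8 → ℝ) → ℝ :=
  pd ⟨i.val, by omega⟩ f

/-- `∂/∂y^i` on functions of `(x¹,…,x⁴,y¹,…,y⁴) ∈ ℝ⁸`. -/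
def py (i : Fin 4) (f : (Fin 8 → ℝ) → ℝ) : (Fin 8 → ℝ) → ℝ :=
  pd ⟨i.val + 4, by omega⟩ f

/-- `ω_{ik} = Θ_{x^i y^k} − Θ_{x^k y^i}`. -/
def omg (Θ : (Fin 8 → ℝ) → ℝ) (i k : Fin 4) : (Fin 8 → ℝ) → ℝ :=
  fun p => px i (py k Θ) p - px k (py i Θ) p

/-- The left-hand side of the 4+4-dimensional TED equation. -/
def tedLHS (Θ : (Fin 8 → ℝ) → ℝ) (p : Fin 8 → ℝ) : ℝ :=
  omg Θ 0 1 p * omg Θ 2 3 p + omg Θ 1 2 p * omg Θ 0 3 p + omg Θ 2 0 p * omg Θ 1 3 p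

/-- The left-hand side of the symmetric general heavenly equation with parameters
`λ₁,…,λ₄`. -/
def heavLHS (Θ : (Fin 8 → ℝ) → ℝ) (lam : Fin 4 → ℝ) (p : Fin 8 → ℝ) : ℝ :=
  (lam 0 - lam 1) * (lam 2 - lam 3) * (px 0 (px 1 Θ) p * px 2 (px 3 Θ) p) +
  (lam 1 - lam 2) * (lam 0 - lam 3) * (px 1 (px 2 Θ) p * px 0 (px 3 Θ) p) +
  (lam 2 - lam 0) * (lam 1 - lam 3) * (px 2 (px 0 Θ) p * px 1 (px 3 Θ) p)


lemma pd_smooth {n : ℕ} (i : Fin n) {f : (Fin n → ℝ) → ℝ} (hf : ContDiff ℝ (⊤ : ℕ∞) f) :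
    ContDiff ℝ (⊤ : ℕ∞) (pd i f) := by
  have h : ContDiff ℝ (⊤ : ℕ∞) (fderiv ℝ f) := hf.fderiv_right (by simp)
  exact (ContinuousLinearMap.apply ℝ ℝ (Pi.single i 1)).contDiff.comp h

lemma pd_const_mul {n : ℕ} (c : ℝ) {f : (Fin n → ℝ) → ℝ} (hf : Differentiable ℝ f)
    (i : Fin n) : pd i (fun p => c * f p) = fun p => c * pd i f p := by
  funext p
  simp [pd, fderiv_const_mul (hf p) c]

lemma pd_comm {n : ℕ} {f : (Fin n → ℝ) → ℝ} (hf : ContDiff ℝ (⊤ : ℕ∞) f) (i k : Fin n)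
    (p : Fin n → ℝ) : pd i (pd k f) p = pd k (pd i f) p := by
  have hd : ContDiff ℝ (⊤ : ℕ∞) (fderiv ℝ f) := hf.fderiv_right (by simp)
  have hda : DifferentiableAt ℝ (fderiv ℝ f) p := (hd.differentiable (by simp)) p
  have key : ∀ v w : Fin n → ℝ,
      fderiv ℝ (fun q => fderiv ℝ f q w) p v = fderiv ℝ (fderiv ℝ f) p v w := by
    intro v w
    have := fderiv_clm_apply (c := fderiv ℝ f) (u := fun _ => w) hda
      (differentiableAt_const w)
    simp [this]
  have hsymm : IsSymmSndFDerivAt ℝ f p :=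
    hf.contDiffAt.isSymmSndFDerivAt (by rw [minSmoothness_of_isRCLikeNormedField]; exact WithTop.coe_le_coe.mpr le_top)
  show fderiv ℝ (fun q => fderiv ℝ f q (Pi.single k 1)) p (Pi.single i 1) =
      fderiv ℝ (fun q => fderiv ℝ f q (Pi.single i 1)) p (Pi.single k 1)
  rw [key, key, hsymm]

/-- travelling wave reduction: if a smooth `Θ` satisfies
`Θ_{y^i} = λ_i Θ_{x^i}` everywhere, then `ω_{ik} = (λ_k − λ_i) Θ_{x^i x^k}`, the left-hand
side of the 4+4-dimensional TED equation equals the left-hand side of the symmetric general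
heavenly equation, and the TED equation holds at a point iff the symmetric general heavenly
equation holds there. -/
theorem stmt12 (Θ : (Fin 8 → ℝ) → ℝ) (hΘ : ContDiff ℝ (⊤ : ℕ∞) Θ) (lam : Fin 4 → ℝ)
    (htw : ∀ i : Fin 4, ∀ p : Fin 8 → ℝ, py i Θ p = lam i * px i Θ p) :
    (∀ i k : Fin 4, ∀ p : Fin 8 → ℝ, omg Θ i k p = (lam k - lam i) * px i (px k Θ) p) ∧
    (∀ p : Fin 8 → ℝ, tedLHS Θ p = heavLHS Θ lam p) ∧
    (∀ p : Fin 8 → ℝ, (tedLHS Θ p = 0 ↔ heavLHS Θ lam p = 0)) := by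
  have homg : ∀ i k : Fin 4, ∀ p : Fin 8 → ℝ,
      omg Θ i k p = (lam k - lam i) * px i (px k Θ) p := by
    intro i k p
    have hyk : py k Θ = fun q => lam k * px k Θ q := funext (htw k)
    have hyi : py i Θ = fun q => lam i * px i Θ q := funext (htw i)
    have hdk : Differentiable ℝ (px k Θ) := (pd_smooth _ hΘ).differentiable (by simp)
    have hdi : Differentiable ℝ (px i Θ) := (pd_smooth _ hΘ).differentiable (by simp)
    have hc : px k (px i Θ) p = px i (px k Θ) p := pd_comm hΘ _ _ p
    simp only [px] at hdk hdi hc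
    simp only [omg, px, hyk, hyi, pd_const_mul _ hdk, pd_const_mul _ hdi, hc]
    ring
  refine ⟨homg, ?_, ?_⟩
  · intro p
    simp only [tedLHS, heavLHS, homg]
    ring
  · intro p
    rw [show tedLHS Θ p = heavLHS Θ lam p by simp only [tedLHS, heavLHS, homg]; ring]
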